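/- Let m ≥ 2 be even. For x = (x_1, …, x_m) ∈ F_2^m define y = (y_1, …, y_m) by y_i = x_i + x_{i+1} for odd i, and y_i = x_i + x_{i+1} + … + x_m for even i (all sums in F_2). Then for every x ∈ F_2^m, y_1 y_2 + y_3 y_4 + … + y_{m-1} y_m = f_{2,3}(x) + x_2 + x_4 + … + x_m in F_2. Consequently f_{2,3} is affine equivalent to the Maiorana-McFarland bent function y_1 y_2 + y_3 y_4 + … + y_{m-1} y_m. -/

import Mathlib

open Finset

/-- Hamming weight of a vector of `F₂^m`. -/
def wt {m : ℕ} (x : Fin m → ZMod 2) : ℕ :=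
  (Finset.univ.filter (fun i => x i = 1)).card

/-- The Boolean function `f_{i₁,i₂}` : value `1` iff `wt x ≡ i₁ or i₂ (mod 4)`. -/
def bf (i₁ i₂ : ℕ) {m : ℕ} (x : Fin m → ZMod 2) : ZMod 2 :=
  if wt x % 4 = i₁ ∨ wt x % 4 = i₂ then 1 else 0

/-- Inner product over `F₂`. -/
def dot {m : ℕ} (a x : Fin m → ZMod 2) : ZMod 2 := ∑ i, a i * x i

/-- The change of variables of Theorem 5: `y i = x i + x (i+1)` for `i` odd (1-based,
i.e. `(i : ℕ) % 2 = 0` with 0-based indexing) and `y i = x i + x (i+1) + ⋯ + x m` else.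
(With `m` even, the `Fin`-addition `i + 1` never wraps around in the cases used.) -/
def yv {m : ℕ} [NeZero m] (x : Fin m → ZMod 2) (i : Fin m) : ZMod 2 :=
  if (i : ℕ) % 2 = 0 then x i + x (i + 1)
  else ∑ j ∈ Finset.univ.filter (fun j => i ≤ j), x j

/-- Affine equivalence of Boolean functions on `F₂^m`. -/
def AffEquiv {m : ℕ} (f g : (Fin m → ZMod 2) → ZMod 2) : Prop :=
  ∃ A : (Fin m → ZMod 2) ≃ₗ[ZMod 2] (Fin m → ZMod 2), ∃ b c : Fin m → ZMod 2, ∃ ε : ZMod 2,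
    ∀ x, g x = f (A x + b) + dot c x + ε

/-! ### Auxiliary lemmas -/

def gfun (n : ℕ) : ZMod 2 := if n % 4 = 2 ∨ n % 4 = 3 then 1 else 0

lemma cast_mod2 (n : ℕ) : (n : ZMod 2) = ((n % 2 : ℕ) : ZMod 2) := (ZMod.natCast_mod n 2).symm

lemma gfun_succ (n : ℕ) : gfun (n+1) = gfun n + (n : ZMod 2) := by
  rw [cast_mod2]
  unfold gfun
  have h : n % 4 = 0 ∨ n % 4 = 1 ∨ n % 4 = 2 ∨ n % 4 = 3 := by omega
  have e2 : n % 2 = n % 4 % 2 := by omega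
  rcases h with h|h|h|h <;>
    · have e1 : (n+1) % 4 = (n % 4 + 1) % 4 := by omega
      rw [e1, e2, h]
      decide

lemma sum_eq_card {m : ℕ} (x : Fin m → ZMod 2) (s : Finset (Fin m)) :
    ∑ k ∈ s, x k = ((s.filter (fun k => x k = 1)).card : ZMod 2) := by
  rw [← Finset.sum_filter_add_sum_filter_not s (fun k => x k = 1)]
  have h0 : ∀ a : ZMod 2, ¬ a = 1 → a = 0 := by decide
  rw [Finset.sum_congr rfl (fun k hk => (Finset.mem_filter.mp hk).2),
    Finset.sum_congr rfl (fun k hk => h0 _ (Finset.mem_filter.mp hk).2)]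
  simp

lemma pairsum {m : ℕ} (x : Fin m → ZMod 2) (s : Finset (Fin m)) :
    ∑ j ∈ s, x j * ∑ k ∈ s.filter (fun k => j < k), x k
      = gfun ((s.filter (fun j => x j = 1)).card) := by
  induction s using Finset.induction_on with
  | empty => simp [gfun]
  | @insert a s ha ih =>
    rw [Finset.sum_insert ha]
    have h1 : (insert a s).filter (fun k => a < k) = s.filter (fun k => a < k) := by
      rw [Finset.filter_insert, if_neg (lt_irrefl a)]
    have h2 : ∀ j ∈ s, x j * ∑ k ∈ (insert a s).filter (fun k => j < k), x k
        = x j * ∑ k ∈ s.filter (fun k => j < k), x k + (if j < a then x j * x a else 0) := by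
      intro j hj
      rw [Finset.filter_insert]
      by_cases hja : j < a
      · rw [if_pos hja, if_pos hja, Finset.sum_insert (by simp [ha])]
        ring
      · rw [if_neg hja, if_neg hja, add_zero]
    rw [Finset.sum_congr rfl h2, Finset.sum_add_distrib, h1]
    have h3 : ∑ j ∈ s, (if j < a then x j * x a else 0)
        = ∑ j ∈ s.filter (fun j => j < a), x j * x a := (Finset.sum_filter _ _).symm
    rw [h3, ← Finset.sum_mul]
    have h4 : ∑ k ∈ s.filter (fun k => a < k), x k + ∑ j ∈ s.filter (fun j => j < a), x j
        = ∑ k ∈ s, x k := by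
      rw [← Finset.sum_filter_add_sum_filter_not s (fun k => a < k)]
      congr 1
      apply Finset.sum_congr _ (fun _ _ => rfl)
      apply Finset.filter_congr
      intro j hj
      have hne : j ≠ a := by rintro rfl; exact ha hj
      simp only [not_lt, eq_iff_iff]
      exact ⟨le_of_lt, fun h => lt_of_le_of_ne h hne⟩
    have h5 : x a * ∑ k ∈ s.filter (fun k => a < k), x k
        + (∑ j ∈ s, x j * ∑ k ∈ s.filter (fun k => j < k), x k
            + (∑ j ∈ s.filter (fun j => j < a), x j) * x a)
        = (∑ j ∈ s, x j * ∑ k ∈ s.filter (fun k => j < k), x k) + x a * ∑ k ∈ s, x k := by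
      rw [← h4]; ring
    rw [h5, ih, sum_eq_card]
    rw [Finset.filter_insert]
    by_cases hxa : x a = 1
    · rw [if_pos hxa, Finset.card_insert_of_notMem (by simp [ha]), gfun_succ, hxa, one_mul]
    · have h0 : ∀ b : ZMod 2, ¬ b = 1 → b = 0 := by decide
      rw [if_neg hxa, h0 _ hxa, zero_mul, add_zero]

lemma val_add_one' {m : ℕ} [NeZero m] (i : Fin m) (h : (i : ℕ) + 1 < m) :
    ((i + 1 : Fin m) : ℕ) = (i : ℕ) + 1 := by
  have h1 : ((1 : Fin m) : ℕ) = 1 % m := rfl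
  rw [Fin.val_add, h1, Nat.mod_eq_of_lt (show 1 < m by omega), Nat.mod_eq_of_lt h]

lemma val_sub_one' {m : ℕ} [NeZero m] (j : Fin m) (h : 1 ≤ (j : ℕ)) :
    ((j - 1 : Fin m) : ℕ) = (j : ℕ) - 1 := by
  have h1 : ((1 : Fin m) : ℕ) = 1 % m := rfl
  rw [Fin.sub_def, h1]
  have := j.isLt
  rw [Nat.mod_eq_of_lt (show 1 < m by omega)]
  show (m - 1 + (j:ℕ)) % m = (j:ℕ) - 1
  have he : m - 1 + (j : ℕ) = ((j:ℕ) - 1) + m := by omega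
  rw [he, Nat.add_mod_right, Nat.mod_eq_of_lt (by omega)]

lemma sum_shift {m : ℕ} [NeZero m] (hme : m % 2 = 0) (f : Fin m → ZMod 2) (k : ℕ) (hk : k % 2 = 0) :
    ∑ i ∈ univ.filter (fun i : Fin m => (i : ℕ) % 2 = 0 ∧ k ≤ (i : ℕ)), f (i + 1)
      = ∑ j ∈ univ.filter (fun j : Fin m => (j : ℕ) % 2 = 1 ∧ k ≤ (j : ℕ)), f j := by
  apply Finset.sum_nbij' (fun i => i + 1) (fun j => j - 1)
  · intro a ha
    simp only [Finset.mem_filter, Finset.mem_univ, true_and] at ha ⊢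
    have hlt : (a : ℕ) + 1 < m := by have := a.isLt; omega
    rw [val_add_one' a hlt]
    omega
  · intro a ha
    simp only [Finset.mem_filter, Finset.mem_univ, true_and] at ha ⊢
    have h1 : 1 ≤ (a : ℕ) := by omega
    rw [val_sub_one' a h1]
    omega
  · intro a ha
    rw [add_sub_cancel_right]
  · intro a ha
    rw [sub_add_cancel]
  · intro a ha
    rfl

/-- The suffix sum `∑_{j ≥ k} x j` (`k : ℕ` threshold). -/
def Sfun {m : ℕ} (x : Fin m → ZMod 2) (k : ℕ) : ZMod 2 :=
  ∑ j ∈ univ.filter (fun j : Fin m => k ≤ (j : ℕ)), x j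

lemma Sfun_succ {m : ℕ} (x : Fin m → ZMod 2) (k : ℕ) (hk : k < m) :
    Sfun x k = x ⟨k, hk⟩ + Sfun x (k+1) := by
  unfold Sfun
  have h : univ.filter (fun j : Fin m => k ≤ (j : ℕ))
      = insert ⟨k, hk⟩ (univ.filter (fun j : Fin m => k + 1 ≤ (j : ℕ))) := by
    ext j
    simp [Fin.ext_iff]
    omega
  rw [h, Finset.sum_insert (by simp)]

lemma sum_pairs {m : ℕ} [NeZero m] (hme : m % 2 = 0) (x : Fin m → ZMod 2)
    (k : ℕ) (hk : k % 2 = 0) :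
    ∑ j ∈ univ.filter (fun j : Fin m => (j:ℕ) % 2 = 0 ∧ k ≤ (j:ℕ)), (x j + x (j+1))
      = Sfun x k := by
  rw [Finset.sum_add_distrib, sum_shift hme x k hk]
  unfold Sfun
  rw [← Finset.sum_filter_add_sum_filter_not
    (univ.filter (fun j : Fin m => k ≤ (j:ℕ))) (fun j => (j:ℕ) % 2 = 0),
    Finset.filter_filter, Finset.filter_filter]
  congr 1
  · apply Finset.sum_congr _ (fun _ _ => rfl)
    ext j; simp only [Finset.mem_filter, Finset.mem_univ, true_and]; tauto
  · apply Finset.sum_congr _ (fun _ _ => rfl)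
    ext j; simp only [Finset.mem_filter, Finset.mem_univ, true_and]; omega

lemma yv_odd {m : ℕ} [NeZero m] (x : Fin m → ZMod 2) (i : Fin m) (h : (i : ℕ) % 2 = 1) :
    yv x i = Sfun x (i : ℕ) := by
  unfold yv
  rw [if_neg (by omega)]
  apply Finset.sum_congr _ (fun _ _ => rfl)
  ext j
  simp only [Finset.mem_filter, Finset.mem_univ, true_and, Fin.le_def]

/-- Main identity (part 1 of the theorem). -/
lemma part1 {m : ℕ} [NeZero m] (hm : 2 ≤ m) (hme : m % 2 = 0) (x : Fin m → ZMod 2) :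
    (∑ i ∈ Finset.univ.filter (fun i : Fin m => (i : ℕ) % 2 = 0), yv x i * yv x (i + 1))
      = bf 2 3 x + ∑ j ∈ Finset.univ.filter (fun j : Fin m => (j : ℕ) % 2 = 1), x j := by
  set T : Fin m → ZMod 2 := fun j => Sfun x ((j:ℕ)+1) with hTdef
  have key : ∀ i ∈ univ.filter (fun i : Fin m => (i:ℕ) % 2 = 0),
      yv x i * yv x (i+1) = (x i * T i + (x (i+1) * T (i+1) + x (i+1))) := by
    intro i hi
    rw [Finset.mem_filter] at hi
    have hi2 := hi.2
    have hlt : (i:ℕ)+1 < m := by have := i.isLt; omega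
    have hv : ((i+1 : Fin m):ℕ) = (i:ℕ)+1 := val_add_one' i hlt
    have hyv1 : yv x i = x i + x (i+1) := if_pos hi2
    have hyv2 : yv x (i+1) = T i := by
      rw [yv_odd x (i+1) (by omega), hv]
    have hT : T i = x (i+1) + T (i+1) := by
      show Sfun x ((i:ℕ)+1) = x (i+1) + Sfun x (((i+1 : Fin m):ℕ)+1)
      rw [Sfun_succ x ((i:ℕ)+1) hlt, hv]
      congr 1
      apply congrArg
      exact Fin.ext hv.symm
    have sq : ∀ a : ZMod 2, a * a = a := by decide
    rw [hyv1, hyv2]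
    calc (x i + x (i+1)) * T i
        = x i * T i + x (i+1) * T i := by ring
      _ = x i * T i + x (i+1) * (x (i+1) + T (i+1)) := by rw [← hT]
      _ = x i * T i + (x (i+1) * x (i+1) + x (i+1) * T (i+1)) := by ring
      _ = x i * T i + (x (i+1) * T (i+1) + x (i+1)) := by rw [sq]; ring
  rw [Finset.sum_congr rfl key, Finset.sum_add_distrib, Finset.sum_add_distrib]
  have eE : univ.filter (fun i : Fin m => (i:ℕ) % 2 = 0)
      = univ.filter (fun i : Fin m => (i:ℕ) % 2 = 0 ∧ 0 ≤ (i:ℕ)) := by simp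
  have eO : univ.filter (fun j : Fin m => (j:ℕ) % 2 = 1)
      = univ.filter (fun j : Fin m => (j:ℕ) % 2 = 1 ∧ 0 ≤ (j:ℕ)) := by simp
  have s1 : ∑ i ∈ univ.filter (fun i : Fin m => (i:ℕ) % 2 = 0), x (i+1) * T (i+1)
      = ∑ j ∈ univ.filter (fun j : Fin m => (j:ℕ) % 2 = 1), x j * T j := by
    rw [eE, eO]
    exact sum_shift hme (fun j => x j * T j) 0 rfl
  have s2 : ∑ i ∈ univ.filter (fun i : Fin m => (i:ℕ) % 2 = 0), x (i+1)
      = ∑ j ∈ univ.filter (fun j : Fin m => (j:ℕ) % 2 = 1), x j := by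
    rw [eE, eO]
    exact sum_shift hme x 0 rfl
  rw [s1, s2, ← add_assoc]
  congr 1
  have comb : ∑ i ∈ univ.filter (fun i : Fin m => (i:ℕ) % 2 = 0), x i * T i
      + ∑ j ∈ univ.filter (fun j : Fin m => (j:ℕ) % 2 = 1), x j * T j
      = ∑ j : Fin m, x j * T j := by
    rw [← Finset.sum_filter_add_sum_filter_not univ (fun j : Fin m => (j:ℕ) % 2 = 0)]
    congr 1
    apply Finset.sum_congr _ (fun _ _ => rfl)
    ext j; simp only [Finset.mem_filter, Finset.mem_univ, true_and]; omega
  rw [comb]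
  have hT2 : ∀ j : Fin m, x j * T j = x j * ∑ k ∈ univ.filter (fun k => j < k), x k := by
    intro j
    congr 1
  rw [Finset.sum_congr rfl (fun j _ => hT2 j), pairsum x univ]
  rfl

/-- `yv` as a linear map. -/
def Ylin (m : ℕ) [NeZero m] : (Fin m → ZMod 2) →ₗ[ZMod 2] (Fin m → ZMod 2) where
  toFun := yv
  map_add' x y := by
    funext i
    unfold yv
    by_cases h : (i:ℕ) % 2 = 0
    · simp only [if_pos h, Pi.add_apply]; ring
    · simp only [if_neg h, Pi.add_apply, Finset.sum_add_distrib]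
  map_smul' c x := by
    funext i
    unfold yv
    by_cases h : (i:ℕ) % 2 = 0
    · simp only [if_pos h, Pi.smul_apply, smul_eq_mul, RingHom.id_apply]; ring
    · simp only [if_neg h, Pi.smul_apply, smul_eq_mul, RingHom.id_apply, Finset.mul_sum]

/-- Explicit left inverse of `yv`. -/
def Xinv {m : ℕ} [NeZero m] (y : Fin m → ZMod 2) (i : Fin m) : ZMod 2 :=
  (if (i:ℕ) % 2 = 0 then y (i+1) else y i)
    + ∑ j ∈ univ.filter (fun j : Fin m => (j:ℕ) % 2 = 0 ∧ (i:ℕ) ≤ (j:ℕ)), y j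

lemma Xinv_yv {m : ℕ} [NeZero m] (hm : 2 ≤ m) (hme : m % 2 = 0) (x : Fin m → ZMod 2) :
    Xinv (yv x) = x := by
  funext i
  unfold Xinv
  have hsum0 : ∀ j ∈ univ.filter (fun j : Fin m => (j:ℕ) % 2 = 0 ∧ (i:ℕ) ≤ (j:ℕ)),
      yv x j = x j + x (j+1) := fun j hj => if_pos (Finset.mem_filter.mp hj).2.1
  have hab : ∀ a b : ZMod 2, a + (b + a) = b := by decide
  have hba : ∀ a b : ZMod 2, (b + a) + a = b := by decide
  by_cases h : (i:ℕ) % 2 = 0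
  · have hlt : (i:ℕ)+1 < m := by have := i.isLt; omega
    have hv : ((i+1:Fin m):ℕ) = (i:ℕ)+1 := val_add_one' i hlt
    rw [if_pos h, Finset.sum_congr rfl hsum0, sum_pairs hme x (i:ℕ) h,
      yv_odd x (i+1) (by omega), hv, Sfun_succ x (i:ℕ) i.isLt]
    have : (⟨(i:ℕ), i.isLt⟩ : Fin m) = i := Fin.ext rfl
    rw [this]
    exact hab _ _
  · rw [if_neg h, Finset.sum_congr rfl hsum0, yv_odd x i (by omega)]
    have hfe : univ.filter (fun j : Fin m => (j:ℕ) % 2 = 0 ∧ (i:ℕ) ≤ (j:ℕ))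
        = univ.filter (fun j : Fin m => (j:ℕ) % 2 = 0 ∧ (i:ℕ)+1 ≤ (j:ℕ)) := by
      ext j; simp; omega
    rw [hfe, sum_pairs hme x ((i:ℕ)+1) (by omega), Sfun_succ x (i:ℕ) i.isLt]
    have : (⟨(i:ℕ), i.isLt⟩ : Fin m) = i := Fin.ext rfl
    rw [this]
    exact hba _ _

/-- Summing odd coordinates, as a linear map. -/
def sumO (m : ℕ) : (Fin m → ZMod 2) →ₗ[ZMod 2] ZMod 2 where
  toFun z := ∑ j ∈ univ.filter (fun j : Fin m => (j:ℕ) % 2 = 1), z j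
  map_add' x y := by simp [Finset.sum_add_distrib]
  map_smul' c x := by simp [Finset.mul_sum]

lemma dot_repr {m : ℕ} (φ : (Fin m → ZMod 2) →ₗ[ZMod 2] ZMod 2) (z : Fin m → ZMod 2) :
    φ z = dot (fun i => φ (Pi.single i 1)) z := by
  have h0 : φ z = ∑ i, φ (Pi.single i (z i)) := by
    conv_lhs => rw [← Finset.univ_sum_single z]
    exact map_sum φ _ _
  rw [h0]
  unfold dot
  refine Finset.sum_congr rfl fun i _ => ?_
  have h01 : ∀ a : ZMod 2, a = 0 ∨ a = 1 := by decide
  rcases h01 (z i) with h | h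
  · rw [h, Pi.single_zero, map_zero, mul_zero]
  · rw [h, mul_one]

theorem stmt_19 (m : ℕ) [NeZero m] (hm : 2 ≤ m) (hme : Even m) :
    (∀ x : Fin m → ZMod 2,
        (∑ i ∈ Finset.univ.filter (fun i : Fin m => (i : ℕ) % 2 = 0), yv x i * yv x (i + 1))
          = bf 2 3 x + ∑ j ∈ Finset.univ.filter (fun j : Fin m => (j : ℕ) % 2 = 1), x j) ∧
      AffEquiv (@bf 2 3 m)
        (fun z : Fin m → ZMod 2 =>
          ∑ i ∈ Finset.univ.filter (fun i : Fin m => (i : ℕ) % 2 = 0), z i * z (i + 1)) := by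
  have hme2 : m % 2 = 0 := Nat.even_iff.mp hme
  refine ⟨part1 hm hme2, ?_⟩
  have hinj : Function.Injective (Ylin m) :=
    Function.LeftInverse.injective (g := Xinv) (fun x => Xinv_yv hm hme2 x)
  have hsurj : Function.Surjective (Ylin m) := LinearMap.injective_iff_surjective.mp hinj
  let Yeq := LinearEquiv.ofBijective (Ylin m) ⟨hinj, hsurj⟩
  let φ : (Fin m → ZMod 2) →ₗ[ZMod 2] ZMod 2 := (sumO m).comp (Yeq.symm : _ →ₗ[ZMod 2] _)
  refine ⟨Yeq.symm, 0, fun i => φ (Pi.single i 1), 0, fun z => ?_⟩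
  have hz : yv (Yeq.symm z) = z := Yeq.apply_symm_apply z
  have hx := part1 hm hme2 (Yeq.symm z)
  rw [hz] at hx
  show (∑ i ∈ Finset.univ.filter (fun i : Fin m => (i : ℕ) % 2 = 0), z i * z (i + 1)) = _
  have e1 : Yeq.symm z + 0 = Yeq.symm z := add_zero _
  rw [hx, e1, add_zero]
  congr 1
  exact dot_repr φ z
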